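/- Let r > 1 be a real number and n ≥ 2 an integer. For x ∈ [1,r]^n define Conv(x) = max_{1 ≤ i ≤ n} r^{i−1}·(Σ_{j=1}^n x_j − (n−i) − r(i−1)) (this is the convex envelope of the multilinear monomial over [1,r]^n). Then the maximum over x ∈ [1,r]^n of ∏_{j=1}^n x_j − Conv(x) equals D_{r,n} := max_{1 ≤ i ≤ n−1} [ (1 + (i/n)(r−1))^n − r^i ], and this maximum is attained only at points of the form t·1 with 1 < t < r (1 denoting the all-ones vector). -/

import Mathlib

open Finset in
/-- chord bound: r^j * (1 + (r-1)*(i-j)) ≤ r^i -/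
lemma chord {r : ℝ} (hr : 1 < r) (i j : ℕ) :
    r ^ j * (1 + (r - 1) * ((i : ℝ) - j)) ≤ r ^ i := by
  have hr0 : (0:ℝ) < r := by linarith
  rcases le_or_gt j i with h | h
  · obtain ⟨k, rfl⟩ := Nat.exists_eq_add_of_le h
    have hb : 1 + (k:ℝ) * (r - 1) ≤ (1 + (r-1)) ^ k :=
      one_add_mul_le_pow (by linarith) k
    have : 1 + (r - 1) * (((j + k : ℕ) : ℝ) - j) = 1 + (k:ℝ) * (r-1) := by
      push_cast; ring
    rw [this, pow_add]
    have : (1 + (r-1)) = r := by ring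
    rw [this] at hb
    exact mul_le_mul_of_nonneg_left hb (by positivity)
  · obtain ⟨m, rfl⟩ := Nat.exists_eq_add_of_lt h
    have hcast : 1 + (r - 1) * ((i : ℝ) - ((i + m + 1 : ℕ) : ℝ)) = 1 - ((m + 1 : ℕ) : ℝ) * (r - 1) := by
      push_cast; ring
    rw [hcast]
    set m' := m + 1 with hm'
    have hb : 1 + (m':ℝ) * (1/r - 1) ≤ (1 + (1/r - 1)) ^ m' := by
      apply one_add_mul_le_pow
      have : (0:ℝ) < 1/r := by positivity
      linarith
    have h1r : (1 + (1/r - 1)) = 1/r := by ring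
    rw [h1r, div_pow, one_pow] at hb
    have hle : 1 - (m':ℝ) * (r - 1) ≤ 1 / r ^ m' := by
      refine le_trans ?_ hb
      have : (1:ℝ)/r - 1 = -((r-1)/r) := by field_simp; ring
      rw [this]
      have h2 : (r - 1)/r ≤ r - 1 := by
        rw [div_le_iff₀ hr0]; nlinarith
      nlinarith [(Nat.cast_pos (α := ℝ)).mpr (Nat.succ_pos m)]
    calc r ^ (i + m') * (1 - (m':ℝ) * (r-1)) ≤ r ^ (i + m') * (1 / r ^ m') := by
          apply mul_le_mul_of_nonneg_left hle (by positivity)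
      _ = r ^ i := by rw [pow_add]; field_simp


open Finset Real

lemma amgm_aux {n : ℕ} (hn : 0 < n) (x : Fin n → ℝ) (hx : ∀ j, 0 < x j) :
    (∑ j, Real.log (x j)) ≤ n * Real.log ((∑ j, x j) / n) := by
  have hconc := strictConcaveOn_log_Ioi.concaveOn
  have h := hconc.le_map_sum (t := Finset.univ) (w := fun _ : Fin n => (1:ℝ)/n)
    (p := x) (fun i _ => by positivity)
    (by simp [Finset.sum_const, Finset.card_univ]; field_simp)
    (fun i _ => hx i)
  simp only [smul_eq_mul] at h
  have h1 : ∑ i, (1:ℝ)/n * Real.log (x i) = (1/n) * ∑ i, Real.log (x i) := by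
    rw [Finset.mul_sum]
  have h2 : ∑ i, (1:ℝ)/n * x i = (∑ i, x i) / n := by
    rw [← Finset.mul_sum]; ring
  rw [h1, h2] at h
  have hn' : (0:ℝ) < n := by exact_mod_cast hn
  calc (∑ j, Real.log (x j)) = n * ((1/n) * ∑ i, Real.log (x i)) := by field_simp
    _ ≤ n * Real.log ((∑ i, x i)/n) := by
        exact mul_le_mul_of_nonneg_left h (le_of_lt hn')

lemma amgm {n : ℕ} (hn : 0 < n) (x : Fin n → ℝ) (hx : ∀ j, 0 < x j) :
    (∏ j, x j) ≤ ((∑ j, x j) / n) ^ n := by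
  have hs : (0:ℝ) < (∑ j, x j) / n := by
    have : (0:ℝ) < ∑ j, x j := Finset.sum_pos (fun i _ => hx i) (by simp [Finset.univ_nonempty_iff]; exact Fin.pos_iff_nonempty.mp hn)
    positivity
  have h := amgm_aux hn x hx
  have : (∏ j, x j) = Real.exp (∑ j, Real.log (x j)) := by
    rw [Real.exp_sum]
    exact (Finset.prod_congr rfl (fun j _ => (Real.exp_log (hx j)).symm))
  rw [this]
  calc Real.exp (∑ j, Real.log (x j)) ≤ Real.exp (n * Real.log ((∑ j, x j)/n)) :=
        Real.exp_le_exp.mpr h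
    _ = ((∑ j, x j)/n) ^ n := by
        rw [← Real.log_pow, Real.exp_log (by positivity)]

lemma amgm_strict {n : ℕ} (hn : 0 < n) (x : Fin n → ℝ) (hx : ∀ j, 0 < x j)
    (hne : ∃ j k, x j ≠ x k) :
    (∏ j, x j) < ((∑ j, x j) / n) ^ n := by
  have hn' : (0:ℝ) < n := by exact_mod_cast hn
  obtain ⟨j₀, k₀, hjk⟩ := hne
  have h := strictConcaveOn_log_Ioi.lt_map_sum (t := Finset.univ)
    (w := fun _ : Fin n => (1:ℝ)/n) (p := x) (fun i _ => by positivity)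
    (by simp [Finset.sum_const, Finset.card_univ]; field_simp)
    (fun i _ => hx i) ⟨j₀, Finset.mem_univ _, k₀, Finset.mem_univ _, hjk⟩
  simp only [smul_eq_mul] at h
  rw [← Finset.mul_sum, ← Finset.mul_sum] at h
  have h2 : (1:ℝ)/n * ∑ i, x i = (∑ i, x i)/n := by ring
  rw [h2] at h
  have h3 : (∑ j, Real.log (x j)) < n * Real.log ((∑ j, x j) / n) := by
    have := mul_lt_mul_of_pos_left h hn'
    calc (∑ j, Real.log (x j)) = n * ((1/n) * ∑ i, Real.log (x i)) := by field_simp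
      _ < n * Real.log ((∑ i, x i)/n) := this
  have hs : (0:ℝ) < (∑ j, x j) / n := by
    have : (0:ℝ) < ∑ j, x j := Finset.sum_pos (fun i _ => hx i) (by simp [Finset.univ_nonempty_iff]; exact Fin.pos_iff_nonempty.mp hn)
    positivity
  have hprod : (∏ j, x j) = Real.exp (∑ j, Real.log (x j)) := by
    rw [Real.exp_sum]
    exact (Finset.prod_congr rfl (fun j _ => (Real.exp_log (hx j)).symm))
  rw [hprod]
  calc Real.exp (∑ j, Real.log (x j)) < Real.exp (n * Real.log ((∑ j, x j)/n)) :=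
        Real.exp_lt_exp.mpr h3
    _ = ((∑ j, x j)/n) ^ n := by
        rw [← Real.log_pow, Real.exp_log (by positivity)]


lemma conv_seg {n : ℕ} {c α β a b s : ℝ} (hc : 0 ≤ c) (hα : 0 ≤ α) (ha : 0 ≤ a)
    (hs : s ∈ Set.Icc a b) :
    c * s ^ n - (α * s + β) ≤
      max (c * a ^ n - (α * a + β)) (c * b ^ n - (α * b + β)) := by
  have hab : a ≤ b := le_trans hs.1 hs.2
  have hcx : ConvexOn ℝ (Set.Ici (0:ℝ)) (fun t : ℝ => c * t ^ n - (α * t + β)) := by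
    have h1 : ConvexOn ℝ (Set.Ici (0:ℝ)) (fun t : ℝ => c * t ^ n) := by
      have := (convexOn_pow n).smul hc
      simpa [smul_eq_mul] using this
    have h2 : ConcaveOn ℝ (Set.Ici (0:ℝ)) (fun t : ℝ => α * t + β) := by
      have := ((concaveOn_id (convex_Ici (0:ℝ))).smul hα).add_const β
      exact this
    have := h1.sub h2
    exact this
  have hseg : s ∈ segment ℝ a b := by rw [segment_eq_Icc hab]; exact hs
  exact hcx.le_on_segment ha (le_trans ha hab) hseg


/-- Convex envelope error of the multilinear monomial over `[1,r]^n`. -/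
theorem stmt5 (n : ℕ) (hn : 2 ≤ n) (r : ℝ) (hr : 1 < r)
    (Conv : (Fin n → ℝ) → ℝ)
    (hConv : ∀ x, Conv x = ⨆ i : Fin n,
      r ^ (i : ℕ) * (∑ j, x j - ((n : ℝ) - (i : ℕ) - 1) - r * (i : ℕ)))
    (D : ℝ)
    (hD : D = ⨆ i : Fin (n - 1),
      ((1 + (((i : ℕ) : ℝ) + 1) / n * (r - 1)) ^ n - r ^ ((i : ℕ) + 1))) :
    IsGreatest ((fun x => (∏ j, x j) - Conv x) '' Set.Icc (1 : Fin n → ℝ) (fun _ => r)) D ∧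
    ∀ x ∈ Set.Icc (1 : Fin n → ℝ) (fun _ => r),
      (∏ j, x j) - Conv x = D → ∃ t : ℝ, 1 < t ∧ t < r ∧ x = fun _ => t := by
  have hn0 : 0 < n := by omega
  have hN : (0:ℝ) < n := by exact_mod_cast hn0
  have hNne : (n:ℝ) ≠ 0 := ne_of_gt hN
  have hr0 : (0:ℝ) < r := by linarith
  have hr1 : (0:ℝ) < r - 1 := by linarith
  haveI : Nonempty (Fin (n-1)) := ⟨⟨0, by omega⟩⟩
  haveI : Nonempty (Fin n) := ⟨⟨0, by omega⟩⟩
  set E : ℕ → ℝ := fun k => (1 + (k:ℝ)/n*(r-1))^n - r^k with hE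
  -- D's terms are E (i+1)
  have hDterm : ∀ i : Fin (n-1),
      (1 + (((i : ℕ) : ℝ) + 1) / n * (r - 1)) ^ n - r ^ ((i : ℕ) + 1) = E ((i:ℕ)+1) := by
    intro i; simp only [hE]; push_cast; ring_nf
  have hE0 : E 0 = 0 := by simp [hE]
  have hEn : E n = 0 := by
    simp only [hE]
    have : 1 + (n:ℝ)/n*(r-1) = r := by field_simp; ring
    rw [this]; ring
  -- E k ≤ D for 1 ≤ k ≤ n-1
  have hbddD : BddAbove (Set.range fun i : Fin (n-1) =>
      (1 + (((i : ℕ) : ℝ) + 1) / n * (r - 1)) ^ n - r ^ ((i : ℕ) + 1)) :=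
    Set.Finite.bddAbove (Set.finite_range _)
  have hED : ∀ k : ℕ, 1 ≤ k → k ≤ n - 1 → E k ≤ D := by
    intro k hk1 hk2
    rw [hD]
    have := le_ciSup hbddD (⟨k-1, by omega⟩ : Fin (n-1))
    refine le_trans (le_of_eq ?_) this
    rw [hDterm]
    congr 1
    simp only [Fin.val_mk]
    omega
  -- D is positive
  have hE1pos : 0 < E 1 := by
    simp only [hE, Nat.cast_one, pow_one]
    have hs0 : (-1:ℝ) ≤ (r-1)/n := by
      have : (0:ℝ) ≤ (r-1)/n := by positivity
      linarith
    have hs1 : (r-1)/n ≠ 0 := by positivity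
    have hp : (1:ℝ) < n := by exact_mod_cast (by omega : 1 < n)
    have hb := one_add_mul_self_lt_rpow_one_add hs0 hs1 (p := (n:ℝ)) hp
    rw [Real.rpow_natCast] at hb
    have h1 : 1 + (n:ℝ) * ((r-1)/n) = r := by field_simp; ring
    have h2 : 1 + (1:ℝ)/n*(r-1) = 1 + (r-1)/n := by ring
    rw [h2]
    nlinarith [hb]
  have hDpos : 0 < D := lt_of_lt_of_le hE1pos (hED 1 le_rfl (by omega))
  -- sum bounds
  have hsum : ∀ x ∈ Set.Icc (1 : Fin n → ℝ) (fun _ => r),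
      (n:ℝ) ≤ ∑ j, x j ∧ (∑ j, x j) ≤ n * r := by
    intro x hx
    constructor
    · calc (n:ℝ) = ∑ _j : Fin n, (1:ℝ) := by simp
        _ ≤ ∑ j, x j := Finset.sum_le_sum (fun j _ => hx.1 j)
    · calc (∑ j, x j) ≤ ∑ _j : Fin n, r := Finset.sum_le_sum (fun j _ => hx.2 j)
        _ = n * r := by simp [mul_comm]
  -- key upper bound on the envelope gap via sum
  have hkey : ∀ x ∈ Set.Icc (1 : Fin n → ℝ) (fun _ => r),
      ((∑ j, x j)/n)^n - Conv x ≤ D := by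
    intro x hx
    obtain ⟨hs1, hs2⟩ := hsum x hx
    set s := ∑ j, x j with hsdef
    set u := (s - n)/(r-1) with hu
    have hu0 : 0 ≤ u := by
      apply div_nonneg _ (le_of_lt hr1); linarith
    have hun : u ≤ n := by
      rw [hu, div_le_iff₀ hr1]; nlinarith
    set i := min (n-1) ⌊u⌋₊ with hi
    have hi1 : i ≤ n - 1 := min_le_left _ _
    have hin : i < n := by omega
    have hi_le : (i:ℝ) ≤ u := by
      have h1 : (i:ℕ) ≤ ⌊u⌋₊ := min_le_right _ _
      calc (i:ℝ) ≤ (⌊u⌋₊ : ℝ) := by exact_mod_cast h1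
        _ ≤ u := Nat.floor_le hu0
    have hi_ge : u ≤ (i:ℝ) + 1 := by
      rcases min_cases (n-1) ⌊u⌋₊ with ⟨heq, _⟩ | ⟨heq, _⟩
      · rw [hi, heq]
        have hc : ((n-1:ℕ):ℝ) + 1 = n := by
          rw [Nat.cast_sub (by omega : 1 ≤ n)]; push_cast; ring
        rw [hc]; exact hun
      · rw [hi, heq]
        have := Nat.lt_floor_add_one u
        linarith
    set a := (n:ℝ) + i*(r-1) with ha
    set b := (n:ℝ) + ((i:ℝ)+1)*(r-1) with hb
    have hsa : a ≤ s := by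
      rw [ha]
      have h1 : (i:ℝ)*(r-1) ≤ u*(r-1) := mul_le_mul_of_nonneg_right hi_le (le_of_lt hr1)
      have hueq : u*(r-1) = s - n := by rw [hu, div_mul_cancel₀ _ (ne_of_gt hr1)]
      linarith
    have hsb : s ≤ b := by
      rw [hb]
      have h1 : u*(r-1) ≤ ((i:ℝ)+1)*(r-1) := mul_le_mul_of_nonneg_right hi_ge (le_of_lt hr1)
      have hueq : u*(r-1) = s - n := by rw [hu, div_mul_cancel₀ _ (ne_of_gt hr1)]
      linarith
    -- Conv x ≥ L_i(s)
    have hConvge : r^i * (s - ((n:ℝ) - i - 1) - r*i) ≤ Conv x := by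
      rw [hConv x]
      have hbdd : BddAbove (Set.range fun j : Fin n =>
          r ^ (j : ℕ) * (∑ j, x j - ((n : ℝ) - (j : ℕ) - 1) - r * (j : ℕ))) :=
        Set.Finite.bddAbove (Set.finite_range _)
      have := le_ciSup hbdd (⟨i, hin⟩ : Fin n)
      simpa using this
    have step1 : ((∑ j, x j)/n)^n - Conv x ≤ (s/n)^n - r^i * (s - ((n:ℝ) - i - 1) - r*i) := by
      rw [← hsdef]; linarith
    -- convexity on segment
    set c := 1/(n:ℝ)^n with hc
    set α := r^i with hα
    set β := r^i * (-((n:ℝ) - i - 1) - r*i) with hβ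
    have hrw : ∀ z : ℝ, (z/n)^n - r^i * (z - ((n:ℝ) - i - 1) - r*i) = c * z^n - (α*z + β) := by
      intro z; rw [hc, hα, hβ, div_pow]; ring
    have hseg := conv_seg (n := n) (a := a) (b := b) (s := s)
      (c := c) (α := α) (β := β) (by rw [hc]; positivity) (by rw [hα]; positivity)
      (by rw [ha]; positivity) ⟨hsa, hsb⟩
    have hqa : c * a^n - (α*a + β) = E i := by
      rw [← hrw a, hE]
      have h1 : a - ((n:ℝ) - i - 1) - r*i = 1 := by rw [ha]; ring
      have h2 : a/n = 1 + (i:ℝ)/n*(r-1) := by rw [ha]; field_simp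
      rw [h1, h2]; ring
    have hqb : c * b^n - (α*b + β) = E (i+1) := by
      rw [← hrw b, hE]
      have h1 : b - ((n:ℝ) - i - 1) - r*i = r := by rw [hb]; ring
      have h2 : b/n = 1 + ((i+1:ℕ):ℝ)/n*(r-1) := by rw [hb]; push_cast; field_simp
      rw [h1, h2]
      have : r^i * r = r^(i+1) := by rw [pow_succ]
      rw [this]
    have hEiD : E i ≤ D := by
      rcases Nat.eq_zero_or_pos i with h0 | h0
      · rw [h0, hE0]; exact le_of_lt hDpos
      · exact hED i h0 hi1
    have hEi1D : E (i+1) ≤ D := by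
      rcases eq_or_lt_of_le (by omega : i + 1 ≤ n) with h0 | h0
      · rw [h0, hEn]; exact le_of_lt hDpos
      · exact hED (i+1) (by omega) (by omega)
    calc ((∑ j, x j)/n)^n - Conv x ≤ c * s^n - (α*s + β) := by rw [← hrw s]; exact step1
      _ ≤ max (c*a^n - (α*a+β)) (c*b^n - (α*b+β)) := hseg
      _ ≤ D := by rw [hqa, hqb]; exact max_le hEiD hEi1D
  haveI : NeZero n := ⟨by omega⟩
  -- Conv at constant vector t = 1 + k/n*(r-1), k < n
  have hConvConst : ∀ k : ℕ, k < n → Conv (fun _ => 1 + (k:ℝ)/n*(r-1)) = r^k := by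
    intro k hk
    rw [hConv]
    simp only [Finset.sum_const, Finset.card_univ, Fintype.card_fin, nsmul_eq_mul]
    have hnt : (n:ℝ) * (1 + (k:ℝ)/n*(r-1)) = n + k*(r-1) := by field_simp
    apply le_antisymm
    · apply ciSup_le
      intro j
      have hrw : r ^ (j:ℕ) * ((n:ℝ) * (1 + (k:ℝ)/n*(r-1)) - ((n:ℝ) - (j:ℕ) - 1) - r * (j:ℕ))
          = r^(j:ℕ) * (1 + (r-1)*((k:ℝ) - (j:ℕ))) := by
        rw [hnt]; ring
      rw [hrw]
      exact chord hr k j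
    · have hbdd : BddAbove (Set.range fun j : Fin n =>
          r ^ (j : ℕ) * ((n:ℝ) * (1 + (k:ℝ)/n*(r-1)) - ((n : ℝ) - (j : ℕ) - 1) - r * (j : ℕ))) :=
        Set.Finite.bddAbove (Set.finite_range _)
      refine le_trans (le_of_eq ?_) (le_ciSup hbdd (⟨k, hk⟩ : Fin n))
      simp only [Fin.val_mk]
      rw [hnt]; ring
  -- lower bound for Conv at the all-r vector
  have hConvr : r^n ≤ Conv (fun _ => r) := by
    rw [hConv]
    have hbdd : BddAbove (Set.range fun j : Fin n =>
        r ^ (j : ℕ) * ((∑ _i : Fin n, r) - ((n : ℝ) - (j : ℕ) - 1) - r * (j : ℕ))) :=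
      Set.Finite.bddAbove (Set.finite_range _)
    refine le_trans (le_of_eq ?_) (le_ciSup hbdd (⟨n-1, by omega⟩ : Fin n))
    simp only [Fin.val_mk, Finset.sum_const, Finset.card_univ, Fintype.card_fin, nsmul_eq_mul]
    rw [Nat.cast_sub (by omega : 1 ≤ n), Nat.cast_one]
    have : r ^ n = r ^ (n-1) * r := by
      rw [← pow_succ]; congr 1; omega
    rw [this]; ring
  -- the maximizer
  obtain ⟨k₀, hk₀⟩ := Finite.exists_max (fun i : Fin (n-1) =>
      (1 + (((i : ℕ) : ℝ) + 1) / n * (r - 1)) ^ n - r ^ ((i : ℕ) + 1))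
  have hDeq : D = E ((k₀:ℕ)+1) := by
    rw [hD]
    apply le_antisymm
    · exact ciSup_le fun i => (hk₀ i).trans_eq (hDterm k₀)
    · rw [← hDterm k₀]; exact le_ciSup hbddD k₀
  set k1 := (k₀:ℕ)+1 with hk1def
  have hk1n : k1 ≤ n - 1 := by have := k₀.isLt; omega
  have hk1R : (k1:ℝ) < n := by exact_mod_cast (by omega : k1 < n)
  have hk1R0 : (0:ℝ) < k1 := by exact_mod_cast (by omega : 0 < k1)
  set t0 := 1 + (k1:ℝ)/n*(r-1) with ht0
  have ht1 : 1 < t0 := by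
    rw [ht0]
    have : 0 < (k1:ℝ)/n*(r-1) := by positivity
    linarith
  have htr : t0 < r := by
    rw [ht0]
    have h1 : (k1:ℝ)/n < 1 := by rw [div_lt_one hN]; exact hk1R
    nlinarith
  have hmem : (fun _ : Fin n => t0) ∈ Set.Icc (1 : Fin n → ℝ) (fun _ => r) :=
    ⟨fun j => le_of_lt ht1, fun j => le_of_lt htr⟩
  have hval : (∏ _j : Fin n, t0) - Conv (fun _ => t0) = D := by
    rw [Finset.prod_const, Finset.card_univ, Fintype.card_fin, ht0,
      hConvConst k1 (by omega), hDeq]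
    try simp only [hE]
  refine ⟨⟨⟨fun _ => t0, hmem, hval⟩, ?_⟩, ?_⟩
  · -- upper bound
    rintro y ⟨x, hx, rfl⟩
    have hpos : ∀ j, 0 < x j := fun j => lt_of_lt_of_le one_pos (hx.1 j)
    have h1 := amgm hn0 x hpos
    have h2 := hkey x hx
    show (∏ j, x j) - Conv x ≤ D
    linarith
  · -- uniqueness
    intro x hx heq
    have hpos : ∀ j, 0 < x j := fun j => lt_of_lt_of_le one_pos (hx.1 j)
    have hall : ∀ j, x j = x 0 := by
      by_contra hcon
      push_neg at hcon
      obtain ⟨j, hj⟩ := hcon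
      have hlt := amgm_strict hn0 x hpos ⟨j, 0, hj⟩
      have h2 := hkey x hx
      linarith
    refine ⟨x 0, ?_, ?_, funext hall⟩
    · rcases lt_or_eq_of_le (hx.1 0) with h | h
      · simpa using h
      · exfalso
        have hx1 : x = fun _ => (1:ℝ) := funext fun j => by rw [hall j, ← h]; simp
        have hprod : (∏ j, x j) = 1 := by rw [hx1]; simp
        have hc1 : Conv x = 1 := by
          have h0 : (fun _ : Fin n => (1:ℝ)) = (fun _ : Fin n => 1 + ((0:ℕ):ℝ)/n*(r-1)) := by
            funext j; norm_num
          rw [hx1, h0, hConvConst 0 hn0]; norm_num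
        rw [hprod, hc1] at heq
        simp at heq
        linarith
    · rcases lt_or_eq_of_le (hx.2 0) with h | h
      · exact h
      · exfalso
        have hxr : x = fun _ => r := funext fun j => by rw [hall j, h]
        have hprod : (∏ j, x j) = r^n := by
          rw [hxr, Finset.prod_const, Finset.card_univ, Fintype.card_fin]
        have h2 : r^n ≤ Conv x := by rw [hxr]; exact hConvr
        rw [hprod] at heq
        linarith
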